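/- The averaging map P_H minimizes relative entropy to the invariant set: for any state ρ and any H-invariant state σ, S(ρ‖P_H(ρ)) ≤ S(ρ‖σ), with P_H(ρ) the unique minimizer. -/

import Mathlib

open Matrix MeasureTheory
open scoped ComplexOrder

attribute [local instance] Matrix.normedAddCommGroup Matrix.normedSpace

/-- Logarithm of a Hermitian matrix, via its spectral decomposition. -/
noncomputable def matLog {n : ℕ} (A : Matrix (Fin n) (Fin n) ℂ)
    (hA : A.IsHermitian) : Matrix (Fin n) (Fin n) ℂ :=
  (hA.eigenvectorUnitary : Matrix (Fin n) (Fin n) ℂ) *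
    Matrix.diagonal (fun i => (Real.log (hA.eigenvalues i) : ℂ)) *
    (hA.eigenvectorUnitary : Matrix (Fin n) (Fin n) ℂ)ᴴ

/-- Quantum relative entropy `S(ρ‖σ) = tr(ρ log ρ) − tr(ρ log σ)`. -/
noncomputable def relEnt {n : ℕ} (ρ σ : Matrix (Fin n) (Fin n) ℂ)
    (hρ : ρ.IsHermitian) (hσ : σ.IsHermitian) : ℝ :=
  ((ρ * matLog ρ hρ - ρ * matLog σ hσ).trace).re

/-- The Haar-averaging map `P_H(ρ) = ∫_H U(h) ρ U(h)† dh` minimizes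
the relative entropy to the `H`-invariant states: for any state `ρ` and any
`H`-invariant state `σ`, `S(ρ‖P_H(ρ)) ≤ S(ρ‖σ)`, and `P_H(ρ)` is the unique
minimizer. -/
lemma matLog_eq_cfc {n : ℕ} (A : Matrix (Fin n) (Fin n) ℂ) (hA : A.IsHermitian) :
    matLog A hA = cfc Real.log A := by rw [hA.cfc_eq]; rfl

/-- Conjugation by a unitary as a star algebra homomorphism. -/
noncomputable def conjSAH {n : ℕ} (u : Matrix.unitaryGroup (Fin n) ℂ) :
    Matrix (Fin n) (Fin n) ℂ →⋆ₐ[ℂ] Matrix (Fin n) (Fin n) ℂ where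
  toFun M := (u : Matrix (Fin n) (Fin n) ℂ) * M * (u : Matrix (Fin n) (Fin n) ℂ)ᴴ
  map_one' := by
    simp [← Matrix.star_eq_conjTranspose, Unitary.coe_mul_star_self]
  map_mul' M N := by
    have h : (u : Matrix (Fin n) (Fin n) ℂ)ᴴ * (u : Matrix (Fin n) (Fin n) ℂ) = 1 := by
      rw [← Matrix.star_eq_conjTranspose]; exact Unitary.coe_star_mul_self u
    calc (u : Matrix (Fin n) (Fin n) ℂ) * (M * N) * (u : Matrix (Fin n) (Fin n) ℂ)ᴴ
        = (u : Matrix (Fin n) (Fin n) ℂ) * M * ((u : Matrix (Fin n) (Fin n) ℂ)ᴴ *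
          (u : Matrix (Fin n) (Fin n) ℂ)) * N * (u : Matrix (Fin n) (Fin n) ℂ)ᴴ := by
          rw [h]; noncomm_ring
      _ = _ := by noncomm_ring
  map_zero' := by simp
  map_add' M N := by noncomm_ring
  commutes' r := by
    simp only [Algebra.algebraMap_eq_smul_one]
    rw [Matrix.mul_smul, smul_mul_assoc]
    simp [← Matrix.star_eq_conjTranspose, Unitary.coe_mul_star_self]
  map_star' M := by
    simp only [Matrix.star_eq_conjTranspose, Matrix.conjTranspose_mul,
      Matrix.conjTranspose_conjTranspose]
    noncomm_ring

lemma conj_matLog {n : ℕ} {σ : Matrix (Fin n) (Fin n) ℂ} (hσ : σ.PosDef)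
    (u : Matrix.unitaryGroup (Fin n) ℂ)
    (hinv : (u : Matrix (Fin n) (Fin n) ℂ) * σ * (u : Matrix (Fin n) (Fin n) ℂ)ᴴ = σ) :
    (u : Matrix (Fin n) (Fin n) ℂ) * matLog σ hσ.1 * (u : Matrix (Fin n) (Fin n) ℂ)ᴴ
      = matLog σ hσ.1 := by
  have hcont : ContinuousOn Real.log (spectrum ℝ σ) := by
    apply Real.continuousOn_log.mono
    rw [hσ.1.spectrum_real_eq_range_eigenvalues]
    rintro - ⟨i, rfl⟩
    exact ne_of_gt (hσ.eigenvalues_pos i)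
  have hφ : Continuous (conjSAH u) := by
    show Continuous fun M : Matrix (Fin n) (Fin n) ℂ => (u : Matrix (Fin n) (Fin n) ℂ) * M * _ᴴ
    exact (continuous_const.matrix_mul continuous_id).matrix_mul continuous_const
  have hsa : IsSelfAdjoint σ := hσ.1
  have hφa : IsSelfAdjoint ((conjSAH u) σ) := by
    show IsSelfAdjoint ((u : Matrix (Fin n) (Fin n) ℂ) * σ * _ᴴ)
    rw [hinv]; exact hσ.1
  have h := StarAlgHomClass.map_cfc (S := ℂ) (conjSAH u) Real.log σ hcont hφ hsa hφa
  rw [matLog_eq_cfc]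
  calc (u : Matrix (Fin n) (Fin n) ℂ) * cfc Real.log σ * (u : Matrix (Fin n) (Fin n) ℂ)ᴴ
      = (conjSAH u) (cfc Real.log σ) := rfl
    _ = cfc Real.log ((conjSAH u) σ) := h
    _ = cfc Real.log σ := by show cfc Real.log (_ * σ * _ᴴ) = _; rw [hinv]


section Klein
variable {n : ℕ} {A B : Matrix (Fin n) (Fin n) ℂ}

lemma trace_diag_conj (d e : Fin n → ℂ) (M : Matrix (Fin n) (Fin n) ℂ) :
    (Matrix.diagonal d * (M * Matrix.diagonal e * Mᴴ)).trace
      = ∑ i, ∑ j, d i * e j * (M i j * star (M i j)) := by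
  simp only [Matrix.trace, Matrix.diag_apply, Matrix.mul_apply, Matrix.diagonal_apply,
    Matrix.conjTranspose_apply, Finset.mul_sum, Finset.sum_mul]
  rw [Finset.sum_congr rfl]
  intro i _
  rw [Finset.sum_comm]
  apply Finset.sum_congr rfl
  intro j _
  simp [Finset.mul_sum, Finset.sum_mul, Finset.sum_ite_eq, Finset.sum_ite_eq']
  ring

-- key factorization
lemma mul_matLog_eq (hA : A.IsHermitian) (hB : B.IsHermitian) :
    A * matLog B hB =
      (hA.eigenvectorUnitary : Matrix (Fin n) (Fin n) ℂ) *
        (Matrix.diagonal (fun i => (hA.eigenvalues i : ℂ)) *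
          (((hA.eigenvectorUnitary : Matrix (Fin n) (Fin n) ℂ)ᴴ *
              (hB.eigenvectorUnitary : Matrix (Fin n) (Fin n) ℂ)) *
            Matrix.diagonal (fun j => (Real.log (hB.eigenvalues j) : ℂ)) *
            (((hA.eigenvectorUnitary : Matrix (Fin n) (Fin n) ℂ)ᴴ *
              (hB.eigenvectorUnitary : Matrix (Fin n) (Fin n) ℂ))ᴴ))) *
        (hA.eigenvectorUnitary : Matrix (Fin n) (Fin n) ℂ)ᴴ := by
  set V : Matrix (Fin n) (Fin n) ℂ := (hA.eigenvectorUnitary : Matrix (Fin n) (Fin n) ℂ) with hV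
  set W : Matrix (Fin n) (Fin n) ℂ := (hB.eigenvectorUnitary : Matrix (Fin n) (Fin n) ℂ) with hW
  have hVV : V * Vᴴ = 1 := by
    rw [← Matrix.star_eq_conjTranspose]
    exact (Matrix.mem_unitaryGroup_iff).mp hA.eigenvectorUnitary.2
  have hAst : A = V * Matrix.diagonal (fun i => (hA.eigenvalues i : ℂ)) * Vᴴ := by
    conv_lhs => rw [hA.spectral_theorem]
    rfl
  rw [conjTranspose_mul, conjTranspose_conjTranspose]
  calc A * matLog B hB = (V * Matrix.diagonal (fun i => (hA.eigenvalues i : ℂ)) * Vᴴ) *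
        (W * Matrix.diagonal (fun j => (Real.log (hB.eigenvalues j) : ℂ)) * Wᴴ) * (V * Vᴴ) := by
        rw [hVV, mul_one, ← hAst]; rfl
    _ = _ := by noncomm_ring

lemma trace_conj_unitary (hA : A.IsHermitian) (X : Matrix (Fin n) (Fin n) ℂ) :
    ((hA.eigenvectorUnitary : Matrix (Fin n) (Fin n) ℂ) * X *
      (hA.eigenvectorUnitary : Matrix (Fin n) (Fin n) ℂ)ᴴ).trace = X.trace := by
  have hVV : (hA.eigenvectorUnitary : Matrix (Fin n) (Fin n) ℂ)ᴴ *
      (hA.eigenvectorUnitary : Matrix (Fin n) (Fin n) ℂ) = 1 := by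
    rw [← Matrix.star_eq_conjTranspose]
    exact (Matrix.mem_unitaryGroup_iff').mp hA.eigenvectorUnitary.2
  rw [Matrix.trace_mul_cycle, hVV, Matrix.one_mul]

lemma re_trace_mul_matLog (hA : A.IsHermitian) (hB : B.IsHermitian) :
    ((A * matLog B hB).trace).re = ∑ i, ∑ j,
      ‖(((hA.eigenvectorUnitary : Matrix (Fin n) (Fin n) ℂ)ᴴ *
         (hB.eigenvectorUnitary : Matrix (Fin n) (Fin n) ℂ)) i j)‖^2 *
        (hA.eigenvalues i * Real.log (hB.eigenvalues j)) := by
  rw [mul_matLog_eq hA hB, trace_conj_unitary hA, trace_diag_conj]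
  rw [Complex.re_sum]
  apply Finset.sum_congr rfl
  intro i _
  rw [Complex.re_sum]
  apply Finset.sum_congr rfl
  intro j _
  simp only [Complex.star_def, Complex.mul_conj, Complex.normSq_eq_norm_sq,
    ← Complex.ofReal_mul, ← Complex.ofReal_pow, Complex.ofReal_re]
  ring

end Klein

section Klein2
variable {n : ℕ} {A B : Matrix (Fin n) (Fin n) ℂ}

lemma re_trace_mul_matLog_self (hA : A.IsHermitian) :
    ((A * matLog A hA).trace).re = ∑ i, hA.eigenvalues i * Real.log (hA.eigenvalues i) := by
  rw [re_trace_mul_matLog hA hA]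
  have hVV : (hA.eigenvectorUnitary : Matrix (Fin n) (Fin n) ℂ)ᴴ *
      (hA.eigenvectorUnitary : Matrix (Fin n) (Fin n) ℂ) = 1 := by
    rw [← Matrix.star_eq_conjTranspose]
    exact (Matrix.mem_unitaryGroup_iff').mp hA.eigenvectorUnitary.2
  rw [hVV]
  apply Finset.sum_congr rfl
  intro i _
  rw [Finset.sum_eq_single i]
  · simp [Matrix.one_apply_eq]
  · intro j _ hj
    simp [Matrix.one_apply_ne' hj]
  · simp

lemma trace_re_eq_sum_eigenvalues (hA : A.IsHermitian) :
    (A.trace).re = ∑ i, hA.eigenvalues i := by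
  have hAst : A = (hA.eigenvectorUnitary : Matrix (Fin n) (Fin n) ℂ) *
      Matrix.diagonal (fun i => (hA.eigenvalues i : ℂ)) *
      (hA.eigenvectorUnitary : Matrix (Fin n) (Fin n) ℂ)ᴴ := by
    conv_lhs => rw [hA.spectral_theorem]
    rfl
  conv_lhs => rw [hAst]
  rw [trace_conj_unitary hA, Matrix.trace_diagonal, Complex.re_sum]
  simp

lemma row_sum_one {M : Matrix (Fin n) (Fin n) ℂ} (hM : M * Mᴴ = 1) (i : Fin n) :
    ∑ j, ‖M i j‖^2 = 1 := by
  have := congrFun (congrFun hM i) i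
  simp only [Matrix.mul_apply, Matrix.conjTranspose_apply, Matrix.one_apply_eq] at this
  have := congrArg Complex.re this
  rw [Complex.re_sum] at this
  simp only [Complex.one_re] at this
  rw [← this]
  apply Finset.sum_congr rfl
  intro j _
  simp [Complex.star_def, Complex.mul_conj, Complex.normSq_eq_norm_sq,
    ← Complex.ofReal_pow]

lemma col_sum_one {M : Matrix (Fin n) (Fin n) ℂ} (hM : Mᴴ * M = 1) (j : Fin n) :
    ∑ i, ‖M i j‖^2 = 1 := by
  have := congrFun (congrFun hM j) j
  simp only [Matrix.mul_apply, Matrix.conjTranspose_apply, Matrix.one_apply_eq] at this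
  have := congrArg Complex.re this
  rw [Complex.re_sum] at this
  simp only [Complex.one_re] at this
  rw [← this]
  apply Finset.sum_congr rfl
  intro i _
  rw [Complex.sq_norm]
  simp only [Complex.normSq_apply, Complex.star_def, Complex.mul_re, Complex.conj_re,
    Complex.conj_im]
  ring

end Klein2

section Klein3
variable {n : ℕ} {A B : Matrix (Fin n) (Fin n) ℂ}

lemma klein_scalar' {x y : ℝ} (hx : 0 < x) (hy : 0 < y) :
    x - y ≤ x * Real.log x - x * Real.log y ∧
    (x * Real.log x - x * Real.log y = x - y → x = y) := by
  have hyx : 0 < y / x := div_pos hy hx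
  have h1 : Real.log (y / x) ≤ y / x - 1 := Real.log_le_sub_one_of_pos hyx
  have hlog : Real.log (y / x) = Real.log y - Real.log x := Real.log_div (ne_of_gt hy) (ne_of_gt hx)
  have h3 : x * (y / x - 1) = y - x := by field_simp
  have h4 : x * Real.log (y / x) = x * Real.log y - x * Real.log x := by rw [hlog]; ring
  constructor
  · have := mul_le_mul_of_nonneg_left h1 hx.le
    linarith
  · intro heq
    by_contra hne
    have hyx1 : y / x ≠ 1 := by
      intro h; exact hne ((div_eq_one_iff_eq (ne_of_gt hx)).mp h).symm
    have h2 : Real.log (y / x) < y / x - 1 := Real.log_lt_sub_one_of_pos hyx hyx1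
    have := mul_lt_mul_of_pos_left h2 hx
    linarith

lemma klein_matrix (hA : A.PosDef) (hB : B.PosDef) (htr : A.trace = B.trace) :
    0 ≤ ((A * matLog A hA.1 - A * matLog B hB.1).trace).re ∧
    (((A * matLog A hA.1 - A * matLog B hB.1).trace).re = 0 → A = B) := by
  set V : Matrix (Fin n) (Fin n) ℂ := (hA.1.eigenvectorUnitary : Matrix (Fin n) (Fin n) ℂ) with hVdef
  set W : Matrix (Fin n) (Fin n) ℂ := (hB.1.eigenvectorUnitary : Matrix (Fin n) (Fin n) ℂ) with hWdef
  set M : Matrix (Fin n) (Fin n) ℂ := Vᴴ * W with hMdef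
  set a : Fin n → ℝ := hA.1.eigenvalues with hadef
  set b : Fin n → ℝ := hB.1.eigenvalues with hbdef
  have hVV : V * Vᴴ = 1 := by
    rw [hVdef, ← Matrix.star_eq_conjTranspose]
    exact (Matrix.mem_unitaryGroup_iff).mp hA.1.eigenvectorUnitary.2
  have hVV' : Vᴴ * V = 1 := by
    rw [hVdef, ← Matrix.star_eq_conjTranspose]
    exact (Matrix.mem_unitaryGroup_iff').mp hA.1.eigenvectorUnitary.2
  have hWW : W * Wᴴ = 1 := by
    rw [hWdef, ← Matrix.star_eq_conjTranspose]
    exact (Matrix.mem_unitaryGroup_iff).mp hB.1.eigenvectorUnitary.2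
  have hWW' : Wᴴ * W = 1 := by
    rw [hWdef, ← Matrix.star_eq_conjTranspose]
    exact (Matrix.mem_unitaryGroup_iff').mp hB.1.eigenvectorUnitary.2
  have hMMH : M * Mᴴ = 1 := by
    rw [hMdef, Matrix.conjTranspose_mul, Matrix.conjTranspose_conjTranspose]
    calc Vᴴ * W * (Wᴴ * V) = Vᴴ * (W * Wᴴ) * V := by noncomm_ring
      _ = 1 := by rw [hWW, Matrix.mul_one, hVV']
  have hMHM : Mᴴ * M = 1 := by
    rw [hMdef, Matrix.conjTranspose_mul, Matrix.conjTranspose_conjTranspose]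
    calc Wᴴ * V * (Vᴴ * W) = Wᴴ * (V * Vᴴ) * W := by noncomm_ring
      _ = 1 := by rw [hVV, Matrix.mul_one, hWW']
  have hrow : ∀ i, ∑ j, ‖M i j‖^2 = 1 := row_sum_one hMMH
  have hcol : ∀ j, ∑ i, ‖M i j‖^2 = 1 := col_sum_one hMHM
  have hapos : ∀ i, 0 < a i := fun i => hA.eigenvalues_pos i
  have hbpos : ∀ j, 0 < b j := fun j => hB.eigenvalues_pos j
  have hsum : ∑ i, a i = ∑ j, b j := by
    rw [← trace_re_eq_sum_eigenvalues hA.1, ← trace_re_eq_sum_eigenvalues hB.1, htr]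
  -- Δ as a double sum of nonnegative terms
  have hΔ : ((A * matLog A hA.1 - A * matLog B hB.1).trace).re
      = ∑ i, ∑ j, ‖M i j‖^2 * ((a i * Real.log (a i) - a i * Real.log (b j)) - (a i - b j)) := by
    rw [Matrix.trace_sub, Complex.sub_re, re_trace_mul_matLog_self hA.1,
      re_trace_mul_matLog hA.1 hB.1]
    have e1 : ∑ i, a i * Real.log (a i) = ∑ i, ∑ j, ‖M i j‖^2 * (a i * Real.log (a i)) := by
      apply Finset.sum_congr rfl
      intro i _
      rw [← Finset.sum_mul, hrow i, one_mul]
    have e2 : ∑ i, ∑ j, ‖M i j‖^2 * (a i - b j) = 0 := by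
      have e2a : ∑ i, ∑ j, ‖M i j‖^2 * (a i - b j)
          = (∑ i, ∑ j, ‖M i j‖^2 * a i) - (∑ i, ∑ j, ‖M i j‖^2 * b j) := by
        rw [← Finset.sum_sub_distrib]
        apply Finset.sum_congr rfl
        intro i _
        rw [← Finset.sum_sub_distrib]
        apply Finset.sum_congr rfl
        intro j _
        ring
      have e2b : ∑ i, ∑ j, ‖M i j‖^2 * a i = ∑ i, a i := by
        apply Finset.sum_congr rfl
        intro i _
        rw [← Finset.sum_mul, hrow i, one_mul]
      have e2c : ∑ i, ∑ j, ‖M i j‖^2 * b j = ∑ j, b j := by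
        rw [Finset.sum_comm]
        apply Finset.sum_congr rfl
        intro j _
        rw [← Finset.sum_mul, hcol j, one_mul]
      rw [e2a, e2b, e2c, hsum, sub_self]
    calc (∑ i, a i * Real.log (a i)) - ∑ i, ∑ j, ‖M i j‖^2 * (a i * Real.log (b j))
        = (∑ i, ∑ j, ‖M i j‖^2 * ((a i * Real.log (a i) - a i * Real.log (b j))))
          - ∑ i, ∑ j, ‖M i j‖^2 * (a i - b j) := by
          rw [e2, sub_zero, e1, ← Finset.sum_sub_distrib]
          apply Finset.sum_congr rfl
          intro i _
          rw [← Finset.sum_sub_distrib]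
          apply Finset.sum_congr rfl
          intro j _
          ring
      _ = _ := by
          rw [← Finset.sum_sub_distrib]
          apply Finset.sum_congr rfl
          intro i _
          rw [← Finset.sum_sub_distrib]
          apply Finset.sum_congr rfl
          intro j _
          ring
  have hterm : ∀ i j, 0 ≤ ‖M i j‖^2 * ((a i * Real.log (a i) - a i * Real.log (b j)) - (a i - b j)) := by
    intro i j
    apply mul_nonneg (sq_nonneg _)
    have := (klein_scalar' (hapos i) (hbpos j)).1
    linarith
  constructor
  · rw [hΔ]
    exact Finset.sum_nonneg fun i _ => Finset.sum_nonneg fun j _ => hterm i j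
  · intro heq
    rw [hΔ] at heq
    have hzero : ∀ i j, ‖M i j‖^2 * ((a i * Real.log (a i) - a i * Real.log (b j)) - (a i - b j)) = 0 := by
      intro i j
      have h1 := (Finset.sum_eq_zero_iff_of_nonneg
        (fun i _ => Finset.sum_nonneg fun j _ => hterm i j)).mp heq i (Finset.mem_univ i)
      exact (Finset.sum_eq_zero_iff_of_nonneg (fun j _ => hterm i j)).mp h1 j (Finset.mem_univ j)
    have hab : ∀ i j, M i j ≠ 0 → a i = b j := by
      intro i j hM0
      have hp : (0:ℝ) < ‖M i j‖^2 := pow_pos (norm_pos_iff.mpr hM0) 2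
      have := hzero i j
      have h2 : (a i * Real.log (a i) - a i * Real.log (b j)) - (a i - b j) = 0 := by
        rcases mul_eq_zero.mp this with h | h
        · exact absurd h (ne_of_gt hp)
        · exact h
      exact (klein_scalar' (hapos i) (hbpos j)).2 (by linarith)
    -- diagonal intertwining
    have hDM : Matrix.diagonal (fun i => (a i : ℂ)) * M = M * Matrix.diagonal (fun j => (b j : ℂ)) := by
      ext i j
      rw [Matrix.diagonal_mul, Matrix.mul_diagonal]
      by_cases h : M i j = 0
      · rw [h, mul_zero, zero_mul]
      · rw [hab i j h, mul_comm]
    -- conclude A = B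
    have hAst : A = V * Matrix.diagonal (fun i => (a i : ℂ)) * Vᴴ := by
      conv_lhs => rw [hA.1.spectral_theorem]
      rfl
    have hBst : B = W * Matrix.diagonal (fun j => (b j : ℂ)) * Wᴴ := by
      conv_lhs => rw [hB.1.spectral_theorem]
      rfl
    have hMW : M * Wᴴ = Vᴴ := by
      rw [hMdef, Matrix.mul_assoc, hWW, Matrix.mul_one]
    have hVM : V * M = W := by
      rw [hMdef, ← Matrix.mul_assoc, hVV, Matrix.one_mul]
    calc A = V * Matrix.diagonal (fun i => (a i : ℂ)) * Vᴴ := hAst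
      _ = V * (Matrix.diagonal (fun i => (a i : ℂ)) * M) * Wᴴ := by
          rw [← hMW]; noncomm_ring
      _ = V * (M * Matrix.diagonal (fun j => (b j : ℂ))) * Wᴴ := by rw [hDM]
      _ = W * Matrix.diagonal (fun j => (b j : ℂ)) * Wᴴ := by
          rw [← hVM]; noncomm_ring
      _ = B := hBst.symm

end Klein3


-- generic: linear maps commute with integrals (finite dimensions)
lemma lin_integral {E F : Type*} [NormedAddCommGroup E] [NormedSpace ℂ E]
    [FiniteDimensional ℂ E] [NormedAddCommGroup F] [NormedSpace ℂ F] [CompleteSpace F]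
    (T : E →ₗ[ℂ] F) {α : Type*} [MeasurableSpace α] {μ : Measure α} {f : α → E}
    (hf : Integrable f μ) : T (∫ a, f a ∂μ) = ∫ a, T (f a) ∂μ :=
  (ContinuousLinearMap.integral_comp_comm (LinearMap.toContinuousLinearMap T) hf).symm

lemma cont_integrable {α E : Type*} [TopologicalSpace α] [CompactSpace α]
    [MeasurableSpace α] [BorelSpace α] {μ : Measure α} [IsFiniteMeasure μ]
    [NormedAddCommGroup E] [NormedSpace ℂ E] [FiniteDimensional ℂ E]
    {f : α → E} (hf : Continuous f) : Integrable f μ := by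
  apply hf.integrable_of_hasCompactSupport
  exact HasCompactSupport.of_compactSpace f

/-- quadratic form as a linear map -/
noncomputable def quadLin {n : ℕ} (x : Fin n → ℂ) :
    Matrix (Fin n) (Fin n) ℂ →ₗ[ℂ] ℂ where
  toFun M := star x ⬝ᵥ M.mulVec x
  map_add' M N := by simp [Matrix.add_mulVec, dotProduct_add]
  map_smul' c M := by simp [Matrix.smul_mulVec, dotProduct_smul]

noncomputable instance matContENorm {n : ℕ} : ContinuousENorm (Matrix (Fin n) (Fin n) ℂ) :=
  SeminormedAddGroup.toContinuousENorm

theorem average_minimizes_relative_entropy {G : Type*} [Group G]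
    (H : Subgroup G)
    [TopologicalSpace H] [IsTopologicalGroup H] [CompactSpace H]
    [MeasurableSpace H] [BorelSpace H]
    (μ : Measure H) [μ.IsHaarMeasure] [IsProbabilityMeasure μ]
    {n : ℕ} (U : G →* Matrix.unitaryGroup (Fin n) ℂ)
    (hcont : Continuous fun h : H => (U (h : G) : Matrix (Fin n) (Fin n) ℂ))
    (ρ σ : Matrix (Fin n) (Fin n) ℂ)
    (hρ : ρ.PosDef) (hρtr : ρ.trace = 1)
    (hσ : σ.PosDef) (hσtr : σ.trace = 1)
    (hσinv : ∀ h : H, (U (h : G) : Matrix (Fin n) (Fin n) ℂ) * σ *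
        (U (h : G) : Matrix (Fin n) (Fin n) ℂ)ᴴ = σ)
    (hPH : (∫ h : H, (U (h : G) : Matrix (Fin n) (Fin n) ℂ) * ρ *
        (U (h : G) : Matrix (Fin n) (Fin n) ℂ)ᴴ ∂μ).IsHermitian) :
    relEnt ρ (∫ h : H, (U (h : G) : Matrix (Fin n) (Fin n) ℂ) * ρ *
        (U (h : G) : Matrix (Fin n) (Fin n) ℂ)ᴴ ∂μ) hρ.1 hPH
      ≤ relEnt ρ σ hρ.1 hσ.1 ∧
    (relEnt ρ σ hρ.1 hσ.1
        = relEnt ρ (∫ h : H, (U (h : G) : Matrix (Fin n) (Fin n) ℂ) * ρ *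
            (U (h : G) : Matrix (Fin n) (Fin n) ℂ)ᴴ ∂μ) hρ.1 hPH
      → σ = ∫ h : H, (U (h : G) : Matrix (Fin n) (Fin n) ℂ) * ρ *
            (U (h : G) : Matrix (Fin n) (Fin n) ℂ)ᴴ ∂μ) := by
  classical
  set f : H → Matrix (Fin n) (Fin n) ℂ := fun h => (U (h : G) : Matrix (Fin n) (Fin n) ℂ) * ρ *
      (U (h : G) : Matrix (Fin n) (Fin n) ℂ)ᴴ with hfdef
  have hfc : Continuous f := (hcont.matrix_mul continuous_const).matrix_mul
    hcont.matrix_conjTranspose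
  have hfint : Integrable f μ := cont_integrable hfc
  set P : Matrix (Fin n) (Fin n) ℂ := ∫ h : H, f h ∂μ with hPdef
  have huu' : ∀ h : H, (U (h : G) : Matrix (Fin n) (Fin n) ℂ)ᴴ *
      (U (h : G) : Matrix (Fin n) (Fin n) ℂ) = 1 := by
    intro h
    rw [← Matrix.star_eq_conjTranspose]
    exact (Matrix.mem_unitaryGroup_iff').mp (U (h : G)).2
  have huu : ∀ h : H, (U (h : G) : Matrix (Fin n) (Fin n) ℂ) *
      (U (h : G) : Matrix (Fin n) (Fin n) ℂ)ᴴ = 1 := by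
    intro h
    rw [← Matrix.star_eq_conjTranspose]
    exact (Matrix.mem_unitaryGroup_iff).mp (U (h : G)).2
  -- trace of P
  have htraceP : P.trace = 1 := by
    have h1 : P.trace = ∫ h : H, (f h).trace ∂μ := by
      have := lin_integral (Matrix.traceLinearMap (Fin n) ℂ ℂ) hfint
      exact this
    rw [h1]
    have h2 : ∀ h : H, (f h).trace = 1 := by
      intro h
      show ((U (h : G) : Matrix (Fin n) (Fin n) ℂ) * ρ *
        (U (h : G) : Matrix (Fin n) (Fin n) ℂ)ᴴ).trace = 1
      rw [Matrix.trace_mul_cycle, huu' h, Matrix.one_mul, hρtr]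
    rw [integral_congr_ae (Filter.Eventually.of_forall h2)]
    simp
  -- P is positive definite
  have hPpos : P.PosDef := by
    refine Matrix.PosDef.of_dotProduct_mulVec_pos hPH fun x hx => ?_
    have hq : star x ⬝ᵥ P.mulVec x = ∫ h : H, star x ⬝ᵥ (f h).mulVec x ∂μ := by
      have := lin_integral (quadLin x) hfint
      exact this
    have hterm : ∀ h : H, star x ⬝ᵥ (f h).mulVec x =
        star ((U (h : G) : Matrix (Fin n) (Fin n) ℂ)ᴴ.mulVec x) ⬝ᵥ
          ρ.mulVec ((U (h : G) : Matrix (Fin n) (Fin n) ℂ)ᴴ.mulVec x) := by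
      intro h
      show star x ⬝ᵥ ((U (h : G) : Matrix (Fin n) (Fin n) ℂ) * ρ *
          (U (h : G) : Matrix (Fin n) (Fin n) ℂ)ᴴ).mulVec x = _
      rw [Matrix.star_mulVec, Matrix.conjTranspose_conjTranspose,
        ← Matrix.mulVec_mulVec, ← Matrix.mulVec_mulVec, ← Matrix.dotProduct_mulVec]
    have hxne : ∀ h : H, (U (h : G) : Matrix (Fin n) (Fin n) ℂ)ᴴ.mulVec x ≠ 0 := by
      intro h hcon
      apply hx
      have h2 : (U (h : G) : Matrix (Fin n) (Fin n) ℂ).mulVec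
          ((U (h : G) : Matrix (Fin n) (Fin n) ℂ)ᴴ.mulVec x) = x := by
        rw [Matrix.mulVec_mulVec, huu h, Matrix.one_mulVec]
      rw [← h2, hcon, Matrix.mulVec_zero]
    have hpos : ∀ h : H, 0 < star x ⬝ᵥ (f h).mulVec x := by
      intro h
      rw [hterm h]
      exact hρ.dotProduct_mulVec_pos (hxne h)
    rw [hq]
    have hgc : Continuous fun h : H => star x ⬝ᵥ (f h).mulVec x :=
      (LinearMap.toContinuousLinearMap (quadLin x)).continuous.comp hfc
    have hgint : Integrable (fun h : H => star x ⬝ᵥ (f h).mulVec x) μ := cont_integrable hgc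
    rw [Complex.lt_def]
    constructor
    · have hre : ∫ h : H, (star x ⬝ᵥ (f h).mulVec x).re ∂μ =
          (∫ h : H, star x ⬝ᵥ (f h).mulVec x ∂μ).re := integral_re hgint
      rw [Complex.zero_re, ← hre]
      rw [integral_pos_iff_support_of_nonneg]
      · have : (Function.support fun h : H => (star x ⬝ᵥ (f h).mulVec x).re) = Set.univ := by
          ext h
          simp only [Function.mem_support, Set.mem_univ, iff_true]
          exact ne_of_gt ((Complex.lt_def.mp (hpos h)).1)
        rw [this]
        simp [IsProbabilityMeasure.ne_zero μ]
      · intro h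
        exact le_of_lt ((Complex.lt_def.mp (hpos h)).1)
      · exact (Complex.continuous_re.comp hgc).integrable_of_hasCompactSupport
          (HasCompactSupport.of_compactSpace _)
    · have him : ∫ h : H, (star x ⬝ᵥ (f h).mulVec x).im ∂μ =
          (∫ h : H, star x ⬝ᵥ (f h).mulVec x ∂μ).im := integral_im hgint
      rw [Complex.zero_im, ← him]
      have : ∀ h : H, (star x ⬝ᵥ (f h).mulVec x).im = 0 := by
        intro h
        exact ((Complex.lt_def.mp (hpos h)).2).symm
      rw [integral_congr_ae (Filter.Eventually.of_forall this)]
      simp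
  -- invariance of P
  have hmul : ∀ g h : H, (U (g : G) : Matrix (Fin n) (Fin n) ℂ) * f h *
      (U (g : G) : Matrix (Fin n) (Fin n) ℂ)ᴴ = f (g * h) := by
    intro g h
    show (U (g : G) : Matrix (Fin n) (Fin n) ℂ) *
        ((U (h : G) : Matrix (Fin n) (Fin n) ℂ) * ρ * (U (h : G) : Matrix (Fin n) (Fin n) ℂ)ᴴ) *
        (U (g : G) : Matrix (Fin n) (Fin n) ℂ)ᴴ
      = (U ((g * h : H) : G) : Matrix (Fin n) (Fin n) ℂ) * ρ *
        (U ((g * h : H) : G) : Matrix (Fin n) (Fin n) ℂ)ᴴ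
    rw [Subgroup.coe_mul, _root_.map_mul]
    push_cast
    rw [Matrix.conjTranspose_mul]
    noncomm_ring
  have hPinv : ∀ g : H, (U (g : G) : Matrix (Fin n) (Fin n) ℂ) * P *
      (U (g : G) : Matrix (Fin n) (Fin n) ℂ)ᴴ = P := by
    intro g
    have e1 : (U (g : G) : Matrix (Fin n) (Fin n) ℂ) * P =
        ∫ h : H, (U (g : G) : Matrix (Fin n) (Fin n) ℂ) * f h ∂μ := by
      have := lin_integral (LinearMap.mulLeft ℂ (U (g : G) : Matrix (Fin n) (Fin n) ℂ)) hfint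
      exact this
    have hint2 : Integrable (fun h : H => (U (g : G) : Matrix (Fin n) (Fin n) ℂ) * f h) μ :=
      cont_integrable (continuous_const.matrix_mul hfc)
    have e2 : (U (g : G) : Matrix (Fin n) (Fin n) ℂ) * P *
        (U (g : G) : Matrix (Fin n) (Fin n) ℂ)ᴴ =
        ∫ h : H, (U (g : G) : Matrix (Fin n) (Fin n) ℂ) * f h *
          (U (g : G) : Matrix (Fin n) (Fin n) ℂ)ᴴ ∂μ := by
      rw [e1]
      have := lin_integral (LinearMap.mulRight ℂ (U (g : G) : Matrix (Fin n) (Fin n) ℂ)ᴴ) hint2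
      exact this
    rw [e2]
    calc ∫ h : H, (U (g : G) : Matrix (Fin n) (Fin n) ℂ) * f h *
          (U (g : G) : Matrix (Fin n) (Fin n) ℂ)ᴴ ∂μ
        = ∫ h : H, f (g * h) ∂μ := by
          apply integral_congr_ae
          exact Filter.Eventually.of_forall fun h => hmul g h
      _ = ∫ h : H, f h ∂μ := integral_mul_left_eq_self f g
      _ = P := rfl
  -- trace swap for invariant matrices
  have htrswap : ∀ (L : Matrix (Fin n) (Fin n) ℂ),
      (∀ g : H, (U (g : G) : Matrix (Fin n) (Fin n) ℂ) * L *
        (U (g : G) : Matrix (Fin n) (Fin n) ℂ)ᴴ = L) →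
      (P * L).trace = (ρ * L).trace := by
    intro L hL
    have h1 : (P * L).trace = ∫ h : H, (f h * L).trace ∂μ := by
      have e1 : P * L = ∫ h : H, f h * L ∂μ := by
        have := lin_integral (LinearMap.mulRight ℂ L) hfint
        exact this
      rw [e1]
      have := lin_integral (Matrix.traceLinearMap (Fin n) ℂ ℂ)
        (cont_integrable (f := fun h : H => f h * L) (hfc.matrix_mul continuous_const) (μ := μ))
      exact this
    have h2 : ∀ h : H, (f h * L).trace = (ρ * L).trace := by
      intro h
      have hL' : (U (h : G) : Matrix (Fin n) (Fin n) ℂ)ᴴ * L *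
          (U (h : G) : Matrix (Fin n) (Fin n) ℂ) = L := by
        calc (U (h : G) : Matrix (Fin n) (Fin n) ℂ)ᴴ * L * (U (h : G) : Matrix (Fin n) (Fin n) ℂ)
            = (U (h : G) : Matrix (Fin n) (Fin n) ℂ)ᴴ *
              ((U (h : G) : Matrix (Fin n) (Fin n) ℂ) * L *
                (U (h : G) : Matrix (Fin n) (Fin n) ℂ)ᴴ) *
              (U (h : G) : Matrix (Fin n) (Fin n) ℂ) := by rw [hL h]
          _ = ((U (h : G) : Matrix (Fin n) (Fin n) ℂ)ᴴ * (U (h : G) : Matrix (Fin n) (Fin n) ℂ)) *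
              L * ((U (h : G) : Matrix (Fin n) (Fin n) ℂ)ᴴ *
                (U (h : G) : Matrix (Fin n) (Fin n) ℂ)) := by noncomm_ring
          _ = L := by rw [huu' h, Matrix.one_mul, Matrix.mul_one]
      have e3 : f h * L = (U (h : G) : Matrix (Fin n) (Fin n) ℂ) *
          (ρ * ((U (h : G) : Matrix (Fin n) (Fin n) ℂ)ᴴ * L)) := by
        show (U (h : G) : Matrix (Fin n) (Fin n) ℂ) * ρ *
          (U (h : G) : Matrix (Fin n) (Fin n) ℂ)ᴴ * L = _
        noncomm_ring
      rw [e3, Matrix.trace_mul_comm]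
      have e4 : ρ * ((U (h : G) : Matrix (Fin n) (Fin n) ℂ)ᴴ * L) *
          (U (h : G) : Matrix (Fin n) (Fin n) ℂ) =
          ρ * ((U (h : G) : Matrix (Fin n) (Fin n) ℂ)ᴴ * L *
            (U (h : G) : Matrix (Fin n) (Fin n) ℂ)) := by noncomm_ring
      rw [e4, hL']
    rw [h1, integral_congr_ae (Filter.Eventually.of_forall h2)]
    simp
  -- invariance of the logarithms
  have hLσ : ∀ g : H, (U (g : G) : Matrix (Fin n) (Fin n) ℂ) * matLog σ hσ.1 *
      (U (g : G) : Matrix (Fin n) (Fin n) ℂ)ᴴ = matLog σ hσ.1 :=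
    fun g => conj_matLog hσ (U (g : G)) (hσinv g)
  have hLP : ∀ g : H, (U (g : G) : Matrix (Fin n) (Fin n) ℂ) * matLog P hPH *
      (U (g : G) : Matrix (Fin n) (Fin n) ℂ)ᴴ = matLog P hPH :=
    fun g => conj_matLog hPpos (U (g : G)) (hPinv g)
  have hswapσ : (P * matLog σ hσ.1).trace = (ρ * matLog σ hσ.1).trace := htrswap _ hLσ
  have hswapP : (P * matLog P hPH).trace = (ρ * matLog P hPH).trace := htrswap _ hLP
  -- difference of relative entropies equals the Klein quantity
  have hdiff : relEnt ρ σ hρ.1 hσ.1 - relEnt ρ P hρ.1 hPH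
      = ((P * matLog P hPH - P * matLog σ hσ.1).trace).re := by
    unfold relEnt
    rw [Matrix.trace_sub, Matrix.trace_sub, Matrix.trace_sub, Complex.sub_re, Complex.sub_re,
      Complex.sub_re]
    have h1 : ((ρ * matLog σ hσ.1).trace).re = ((P * matLog σ hσ.1).trace).re := by
      rw [hswapσ]
    have h2 : ((ρ * matLog P hPH).trace).re = ((P * matLog P hPH).trace).re := by
      rw [hswapP]
    linarith
  have hK := klein_matrix hPpos hσ (by rw [htraceP, hσtr])
  have hK1 : 0 ≤ ((P * matLog P hPH - P * matLog σ hσ.1).trace).re := hK.1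
  constructor
  · linarith [hK1, hdiff]
  · intro heq
    have h0 : ((P * matLog P hPH - P * matLog σ hσ.1).trace).re = 0 := by
      rw [← hdiff, heq]
      ring
    exact (hK.2 h0).symm
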